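/- The deformed Hermite polynomial equals a Meixner–Pollaczek polynomial: for δ > 0 and all n ≥ 0, H_n(x,δ) = n! δ^{n/2} P_n^{(1/δ)}(x/√δ; π/2), where P_n^{(λ)}(y;φ) is the Meixner–Pollaczek polynomial defined by its three-term recurrence (n+1)P_{n+1}^{(λ)}(y;φ) = 2(y sin φ + (n+λ)cos φ) P_n^{(λ)}(y;φ) - (n+2λ-1) P_{n-1}^{(λ)}(y;φ), P_{-1}=0, P_0=1. At φ = π/2 this reads (n+1)P_{n+1}^{(λ)}(y;π/2) = 2y P_n^{(λ)}(y;π/2) - (n+2λ-1)P_{n-1}^{(λ)}(y;π/2). -/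
import Mathlib


/-- Deformed Hermite polynomials `H_n(x,δ)` defined by the three-term recurrence
`H_{n+1} = 2x H_n - (2n + n(n-1)δ) H_{n-1}`, `H_{-1} = 0`, `H_0 = 1` (so `H_1 = 2x`). -/
noncomputable def deformedHermite (δ : ℝ) : ℕ → ℝ → ℝ
  | 0, _ => 1
  | 1, x => 2 * x
  | (n + 2), x =>
      2 * x * deformedHermite δ (n + 1) x
        - (2 * ((n : ℝ) + 1) + ((n : ℝ) + 1) * (n : ℝ) * δ) * deformedHermite δ n x

/-- Meixner–Pollaczek polynomial `P_n^{(λ)}(y; π/2)`, defined by the three-term recurrence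
`(n+1) P_{n+1} = 2y P_n - (n+2λ-1) P_{n-1}`, `P_{-1} = 0`, `P_0 = 1` (so `P_1 = 2y`). -/
noncomputable def meixnerPollaczekHalfPi (lam : ℝ) : ℕ → ℝ → ℝ
  | 0, _ => 1
  | 1, y => 2 * y
  | (n + 2), y =>
      (2 * y * meixnerPollaczekHalfPi lam (n + 1) y
        - ((n : ℝ) + 1 + 2 * lam - 1) * meixnerPollaczekHalfPi lam n y) / ((n : ℝ) + 2)

theorem deformedHermite_eq_meixnerPollaczek (δ : ℝ) (hδ : 0 < δ) (n : ℕ) (x : ℝ) :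
    deformedHermite δ n x
      = (Nat.factorial n : ℝ) * (Real.sqrt δ) ^ n *
          meixnerPollaczekHalfPi (1 / δ) n (x / Real.sqrt δ) := by
  set s := Real.sqrt δ with hs
  have hs0 : s ≠ 0 := ne_of_gt (Real.sqrt_pos.mpr hδ)
  have hs2 : s ^ 2 = δ := Real.sq_sqrt hδ.le
  have hδ0 : δ ≠ 0 := ne_of_gt hδ
  suffices h : ∀ m : ℕ, (deformedHermite δ m x
      = (Nat.factorial m : ℝ) * s ^ m * meixnerPollaczekHalfPi (1 / δ) m (x / s)) ∧
      (deformedHermite δ (m + 1) x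
      = (Nat.factorial (m + 1) : ℝ) * s ^ (m + 1) *
          meixnerPollaczekHalfPi (1 / δ) (m + 1) (x / s)) from (h n).1
  intro m
  induction m with
  | zero =>
      constructor
      · simp [deformedHermite, meixnerPollaczekHalfPi]
      · simp [deformedHermite, meixnerPollaczekHalfPi]
        field_simp
  | succ k ih =>
      refine ⟨ih.2, ?_⟩
      have h1 := ih.1
      have h2 := ih.2
      show deformedHermite δ (k + 2) x = _
      rw [deformedHermite, h1, h2, meixnerPollaczekHalfPi]
      have hk2 : ((k : ℝ) + 2) ≠ 0 := by positivity
      have hfac : (Nat.factorial (k + 2) : ℝ)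
          = ((k : ℝ) + 2) * ((k : ℝ) + 1) * (Nat.factorial k : ℝ) := by
        push_cast [Nat.factorial_succ]
        ring
      have hfac1 : (Nat.factorial (k + 1) : ℝ)
          = ((k : ℝ) + 1) * (Nat.factorial k : ℝ) := by
        push_cast [Nat.factorial_succ]
        ring
      rw [hfac, hfac1, ← hs2]
      field_simp
      ring
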